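/- Conversely, if 𝒫 ⊆ Proj_𝒞 satisfies 𝒫⊙𝒫 ⊆ 𝒫, \bar{𝒫} = 𝒫, closure under equivalence in 𝒞, and closure under domination, then 𝒫 is a module of projective partitions over 𝒞 (i.e. rpr* ∈ 𝒫 for all r ∈ 𝒞 and p ∈ 𝒫 whenever defined). -/

import Mathlib

/-- A two-colored partition: upper colors `u`, lower colors `d` (`true` = ◦,
`false` = •), and an equivalence relation (the blocks) on the points. -/
structure Pt where
  u : List Bool
  d : List Bool
  rel : Setoid (Fin u.length ⊕ Fin d.length)

/-- The disjoint union of two setoids (no relation across the two parts). -/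
def sumSetoid {α β : Type*} (s : Setoid α) (t : Setoid β) : Setoid (α ⊕ β) where
  r := Sum.LiftRel s.r t.r
  iseqv := by
    constructor
    · rintro (a | b)
      · exact Sum.LiftRel.inl (s.iseqv.refl a)
      · exact Sum.LiftRel.inr (t.iseqv.refl b)
    · intro x y h
      cases h with
      | inl h => exact Sum.LiftRel.inl (s.iseqv.symm h)
      | inr h => exact Sum.LiftRel.inr (t.iseqv.symm h)
    · intro x y z h1 h2
      cases h1 with
      | inl h => cases h2 with | inl h' => exact Sum.LiftRel.inl (s.iseqv.trans h h')
      | inr h => cases h2 with | inr h' => exact Sum.LiftRel.inr (t.iseqv.trans h h')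

/-- Reindexing for reflection across a vertical axis. -/
def revIdx {w : List Bool} (i : Fin ((w.map (fun b => !b)).reverse).length) :
    Fin w.length := (Fin.cast (by simp) i).rev

/-- The adjoint `p*`: reflection across the horizontal axis. -/
def Pt.star (p : Pt) : Pt := ⟨p.d, p.u, Setoid.comap Sum.swap p.rel⟩

/-- The conjugate `p̄`: reflection across a vertical axis with colors inverted. -/
def Pt.conj (p : Pt) : Pt :=
  ⟨(p.u.map (fun b => !b)).reverse, (p.d.map (fun b => !b)).reverse,
   Setoid.comap (Sum.map revIdx revIdx) p.rel⟩

/-- Splitting an index of a concatenation. -/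
def splitIdx {x y : List Bool} (i : Fin (x ++ y).length) :
    Fin x.length ⊕ Fin y.length := finSumFinEquiv.symm (Fin.cast (by simp) i)

/-- Horizontal concatenation `p ⊙ q`. -/
def Pt.tensor (p q : Pt) : Pt :=
  ⟨p.u ++ q.u, p.d ++ q.d,
   Setoid.comap
     (fun z => match z with
       | .inl i => (splitIdx i).elim (fun a => .inl (.inl a)) (fun b => .inr (.inl b))
       | .inr j => (splitIdx j).elim (fun a => .inl (.inr a)) (fun b => .inr (.inr b)))
     (sumSetoid p.rel q.rel)⟩

/-- Vertical concatenation `qp` (`p` on top), defined when the lower coloring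
of `p` equals the upper coloring of `q`: outer points are connected iff joined
by a chain of strings of `p` and `q` through the middle row; loops are
discarded. -/
def Pt.comp (q p : Pt) (h : p.d = q.u) : Pt :=
  let α := Fin p.u.length ⊕ (Fin p.d.length ⊕ Fin q.d.length)
  let i12 : Fin p.u.length ⊕ Fin p.d.length → α := Sum.map id Sum.inl
  let i23 : Fin q.u.length ⊕ Fin q.d.length → α := fun z =>
    match z with
    | .inl a => .inr (.inl (Fin.cast (by rw [h]) a))
    | .inr b => .inr (.inr b)
  let R : α → α → Prop := fun a b =>
    (∃ x y, i12 x = a ∧ i12 y = b ∧ p.rel.r x y) ∨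
    (∃ x y, i23 x = a ∧ i23 y = b ∧ q.rel.r x y)
  ⟨p.u, q.d, Setoid.comap (Sum.map id Sum.inr) (Relation.EqvGen.setoid R)⟩

/-- A projective partition: `pp = p = p*`. -/
def Pt.Projective (p : Pt) : Prop :=
  ∃ h : p.d = p.u, Pt.comp p p h = p ∧ p.star = p

/-- The identity partition with color `c`. -/
def idPt (c : Bool) : Pt := ⟨[c], [c], ⊤⟩

/-- A category of (two-colored) partitions: contains the identity partitions
and the duality partitions (which generate the rotations) and is stable under
horizontal concatenation, vertical concatenation and adjoints. -/
def IsCategory (C : Set Pt) : Prop :=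
  (∀ c : Bool, idPt c ∈ C) ∧
  (∀ c : Bool, (⟨[c, !c], [], ⊤⟩ : Pt) ∈ C) ∧
  (∀ c : Bool, (⟨[], [c, !c], ⊤⟩ : Pt) ∈ C) ∧
  (∀ p ∈ C, ∀ q ∈ C, p.tensor q ∈ C) ∧
  (∀ p ∈ C, p.star ∈ C) ∧
  (∀ p ∈ C, ∀ q ∈ C, ∀ h : Pt.d p = Pt.u q, Pt.comp q p h ∈ C)

/-- A module of projective partitions over a category of partitions `C`:
a set of projective partitions stable under `⊙`, conjugation, and
`p ↦ r p r*` for `r ∈ C` whenever the composition makes sense. -/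
def IsModule (C P : Set Pt) : Prop :=
  (∀ p ∈ P, p.Projective) ∧
  (∀ p ∈ P, ∀ q ∈ P, p.tensor q ∈ P) ∧
  (∀ p ∈ P, p.conj ∈ P) ∧
  (∀ p ∈ P, ∀ r ∈ C, ∀ (h1 : Pt.d r.star = Pt.u p)
    (h2 : Pt.d (Pt.comp p r.star h1) = Pt.u r),
    Pt.comp r (Pt.comp p r.star h1) h2 ∈ P)

-- mirrors of internals
def cA (q p : Pt) : Type := Fin p.u.length ⊕ (Fin p.d.length ⊕ Fin q.d.length)
def ci12 (q p : Pt) : Fin p.u.length ⊕ Fin p.d.length → cA q p := Sum.map id Sum.inl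
def ci23 (q p : Pt) (h : p.d = q.u) : Fin q.u.length ⊕ Fin q.d.length → cA q p := fun z =>
    match z with
    | .inl a => .inr (.inl (Fin.cast (by rw [h]) a))
    | .inr b => .inr (.inr b)
def cR (q p : Pt) (h : p.d = q.u) : cA q p → cA q p → Prop := fun a b =>
    (∃ x y, ci12 q p x = a ∧ ci12 q p y = b ∧ p.rel.r x y) ∨
    (∃ x y, ci23 q p h x = a ∧ ci23 q p h y = b ∧ q.rel.r x y)

lemma comp_def (q p : Pt) (h : p.d = q.u) :
    Pt.comp q p h = ⟨p.u, q.d, Setoid.comap (Sum.map id Sum.inr)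
      (Relation.EqvGen.setoid (cR q p h))⟩ := rfl

lemma comp_rel_iff (q p : Pt) (h : p.d = q.u) (x y : Fin p.u.length ⊕ Fin q.d.length) :
    (Pt.comp q p h).rel.r x y ↔
      Relation.EqvGen (cR q p h) (Sum.map id Sum.inr x) (Sum.map id Sum.inr y) := Iff.rfl

lemma mk_eq {u d : List Bool} {r1 r2 : Setoid (Fin u.length ⊕ Fin d.length)}
    (h : r1 = r2) : Pt.mk u d r1 = Pt.mk u d r2 := by rw [h]

lemma pt_star_star (p : Pt) : p.star.star = p := by
  show Pt.mk p.u p.d _ = p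
  conv_rhs => rw [show p = ⟨p.u, p.d, p.rel⟩ from rfl]
  apply mk_eq
  apply Setoid.ext
  intro a b
  show p.rel.r (Sum.swap (Sum.swap a)) (Sum.swap (Sum.swap b)) ↔ _
  rcases a with a | a <;> rcases b with b | b <;> exact Iff.rfl

open Relation

lemma egMap {α β : Type*} {R : α → α → Prop} {S : β → β → Prop} {f : α → β}
    (h : ∀ x y, R x y → EqvGen S (f x) (f y)) :
    ∀ {x y}, EqvGen R x y → EqvGen S (f x) (f y) := by
  intro x y hxy
  induction hxy with
  | rel a b hab => exact h a b hab
  | refl a => exact EqvGen.refl _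
  | symm a b _ ih => exact EqvGen.symm _ _ ih
  | trans a b c _ _ ih1 ih2 => exact EqvGen.trans _ _ _ ih1 ih2

lemma egLe {α : Type*} {R Ω : α → α → Prop} (hr : ∀ a, Ω a a)
    (hs : ∀ {a b}, Ω a b → Ω b a) (ht : ∀ {a b c}, Ω a b → Ω b c → Ω a c)
    (hg : ∀ x y, R x y → Ω x y) : ∀ {x y}, EqvGen R x y → Ω x y := by
  intro x y hxy
  induction hxy with
  | rel a b hab => exact hg a b hab
  | refl a => exact hr a
  | symm a b _ ih => exact hs ih
  | trans a b c _ _ ih1 ih2 => exact ht ih1 ih2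

lemma egRestrict {α β : Type*} {f : β → α} (hf : Function.Injective f)
    {S : β → β → Prop} {R' : α → α → Prop}
    (hR' : ∀ x y, R' x y → ∃ b b', f b = x ∧ f b' = y ∧ S b b') :
    ∀ {u v}, EqvGen R' u v →
      u = v ∨ ∃ b b', u = f b ∧ v = f b' ∧ EqvGen S b b' := by
  intro u v huv
  induction huv with
  | rel a b hab =>
    obtain ⟨b1, b2, h1, h2, hs⟩ := hR' a b hab
    exact Or.inr ⟨b1, b2, h1.symm, h2.symm, EqvGen.rel _ _ hs⟩
  | refl a => exact Or.inl rfl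
  | symm a b _ ih =>
    rcases ih with h | ⟨b1, b2, h1, h2, hs⟩
    · exact Or.inl h.symm
    · exact Or.inr ⟨b2, b1, h2, h1, EqvGen.symm _ _ hs⟩
  | trans a b c _ _ ih1 ih2 =>
    rcases ih1 with h | ⟨b1, b2, h1, h2, hs⟩
    · rcases ih2 with h' | ⟨b3, b4, h3, h4, hs'⟩
      · exact Or.inl (h.trans h')
      · exact Or.inr ⟨b3, b4, h ▸ h3, h4, hs'⟩
    · rcases ih2 with h' | ⟨b3, b4, h3, h4, hs'⟩
      · exact Or.inr ⟨b1, b2, h1, h' ▸ h2, hs⟩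
      · refine Or.inr ⟨b1, b4, h1, h4, EqvGen.trans _ _ _ hs ?_⟩
        have : b2 = b3 := hf (h2.symm.trans h3)
        exact this ▸ hs'

lemma flatten_hard {α β Φ : Type*} {e1 : β → Φ} {e2 : α → Φ}
    (he1 : Function.Injective e1) (he2 : Function.Injective e2)
    {R1 : β → β → Prop} {R2 : α → α → Prop} {FR : Φ → Φ → Prop}
    (hFR : ∀ x y, FR x y → (∃ b b', e1 b = x ∧ e1 b' = y ∧ R1 b b') ∨
      (∃ u v, e2 u = x ∧ e2 v = y ∧ R2 u v))
    (hR1 : ∀ b b', EqvGen R1 b b' → ∀ u v, e1 b = e2 u → e1 b' = e2 v → EqvGen R2 u v) :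
    ∀ u v : α, EqvGen FR (e2 u) (e2 v) → EqvGen R2 u v := by
  set E1F : Φ → Φ → Prop := fun x y => ∃ b b', e1 b = x ∧ e1 b' = y ∧ R1 b b' with hE
  have key : ∀ u v : α, EqvGen E1F (e2 u) (e2 v) → EqvGen R2 u v := by
    intro u v h
    rcases egRestrict he1 (fun x y h => h) h with heq | ⟨b1, b2, h1, h2, hs⟩
    · rw [he2 heq]; exact EqvGen.refl _
    · exact hR1 b1 b2 hs u v h1.symm h2.symm
  set Xi : Φ → Φ → Prop := fun x y => EqvGen E1F x y ∨
    ∃ u v, EqvGen E1F x (e2 u) ∧ EqvGen E1F y (e2 v) ∧ EqvGen R2 u v with hXi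
  have hrefl : ∀ a, Xi a a := fun a => Or.inl (EqvGen.refl _)
  have hsymm : ∀ {a b}, Xi a b → Xi b a := by
    rintro a b (h | ⟨u, v, l1, l2, hr⟩)
    · exact Or.inl (EqvGen.symm _ _ h)
    · exact Or.inr ⟨v, u, l2, l1, EqvGen.symm _ _ hr⟩
  have htrans : ∀ {a b c}, Xi a b → Xi b c → Xi a c := by
    rintro a b c (h | ⟨u, v, l1, l2, hr⟩) (h' | ⟨u', v', l1', l2', hr'⟩)
    · exact Or.inl (EqvGen.trans _ _ _ h h')
    · exact Or.inr ⟨u', v', EqvGen.trans _ _ _ h l1', l2', hr'⟩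
    · exact Or.inr ⟨u, v, l1, EqvGen.trans _ _ _ (EqvGen.symm _ _ h') l2, hr⟩
    · refine Or.inr ⟨u, v', l1, l2', ?_⟩
      have : EqvGen R2 v u' := key _ _ (EqvGen.trans _ _ _ (EqvGen.symm _ _ l2) l1')
      exact EqvGen.trans _ _ _ hr (EqvGen.trans _ _ _ this hr')
  have hgen : ∀ x y, FR x y → Xi x y := by
    intro x y hxy
    rcases hFR x y hxy with ⟨b1, b2, h1, h2, hs⟩ | ⟨u, v, h1, h2, hr⟩
    · exact Or.inl (EqvGen.rel _ _ ⟨b1, b2, h1, h2, hs⟩)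
    · exact Or.inr ⟨u, v, h1 ▸ EqvGen.refl _, h2 ▸ EqvGen.refl _, EqvGen.rel _ _ hr⟩
  intro u v h
  rcases egLe hrefl hsymm htrans hgen h with h' | ⟨u', v', l1, l2, hr⟩
  · exact key _ _ h'
  · exact EqvGen.trans _ _ _ (key _ _ l1)
      (EqvGen.trans _ _ _ hr (EqvGen.symm _ _ (key _ _ l2)))

open Relation in
lemma star_comp (p q : Pt) (h : p.d = q.u) :
    (Pt.comp q p h).star = Pt.comp p.star q.star h.symm := by
  have hlen : q.u.length = p.d.length := by rw [h]
  -- φ : cA p.star q.star → cA q p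
  let φ : cA p.star q.star → cA q p := fun z =>
    match z with
    | .inl j => .inr (.inr j)
    | .inr (.inl m) => .inr (.inl (Fin.cast hlen m))
    | .inr (.inr i) => .inl i
  let ψ : cA q p → cA p.star q.star := fun z =>
    match z with
    | .inl i => .inr (.inr i)
    | .inr (.inl m) => .inr (.inl (Fin.cast hlen.symm m))
    | .inr (.inr j) => .inl j
  have gen1 : ∀ x y, cR p.star q.star h.symm x y → cR q p h (φ x) (φ y) := by
    rintro x y (⟨a, b, ha, hb, hr⟩ | ⟨a, b, ha, hb, hr⟩) <;> subst ha hb <;>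
      rcases a with a | a <;> rcases b with b | b
    · exact Or.inr ⟨.inr a, .inr b, rfl, rfl, hr⟩
    · exact Or.inr ⟨.inr a, .inl b, rfl, rfl, hr⟩
    · exact Or.inr ⟨.inl a, .inr b, rfl, rfl, hr⟩
    · exact Or.inr ⟨.inl a, .inl b, rfl, rfl, hr⟩
    · exact Or.inl ⟨.inr a, .inr b, rfl, rfl, hr⟩
    · exact Or.inl ⟨.inr a, .inl b, rfl, rfl, hr⟩
    · exact Or.inl ⟨.inl a, .inr b, rfl, rfl, hr⟩
    · exact Or.inl ⟨.inl a, .inl b, rfl, rfl, hr⟩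
  have gen2 : ∀ x y, cR q p h x y → cR p.star q.star h.symm (ψ x) (ψ y) := by
    rintro x y (⟨a, b, ha, hb, hr⟩ | ⟨a, b, ha, hb, hr⟩) <;> subst ha hb <;>
      rcases a with a | a <;> rcases b with b | b
    · exact Or.inr ⟨.inr a, .inr b, rfl, rfl, hr⟩
    · exact Or.inr ⟨.inr a, .inl b, rfl, rfl, hr⟩
    · exact Or.inr ⟨.inl a, .inr b, rfl, rfl, hr⟩
    · exact Or.inr ⟨.inl a, .inl b, rfl, rfl, hr⟩
    · exact Or.inl ⟨.inr a, .inr b, rfl, rfl, hr⟩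
    · exact Or.inl ⟨.inr a, .inl b, rfl, rfl, hr⟩
    · exact Or.inl ⟨.inl a, .inr b, rfl, rfl, hr⟩
    · exact Or.inl ⟨.inl a, .inl b, rfl, rfl, hr⟩
  show Pt.mk q.d p.u _ = Pt.mk q.d p.u _
  apply mk_eq
  apply Setoid.ext
  intro x y
  show EqvGen (cR q p h) (Sum.map id Sum.inr (Sum.swap x)) (Sum.map id Sum.inr (Sum.swap y)) ↔
    EqvGen (cR p.star q.star h.symm) (Sum.map id Sum.inr x) (Sum.map id Sum.inr y)
  constructor
  · intro hxy
    have := egMap (f := ψ) (fun a b hab => EqvGen.rel _ _ (gen2 a b hab)) hxy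
    have e1 : ψ (Sum.map id Sum.inr (Sum.swap x)) = Sum.map id Sum.inr x := by
      rcases x with j | i <;> rfl
    have e2 : ψ (Sum.map id Sum.inr (Sum.swap y)) = Sum.map id Sum.inr y := by
      rcases y with j | i <;> rfl
    rwa [e1, e2] at this
  · intro hxy
    have := egMap (f := φ) (fun a b hab => EqvGen.rel _ _ (gen1 a b hab)) hxy
    have e1 : φ (Sum.map id Sum.inr x) = Sum.map id Sum.inr (Sum.swap x) := by
      rcases x with j | i <;> rfl
    have e2 : φ (Sum.map id Sum.inr y) = Sum.map id Sum.inr (Sum.swap y) := by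
      rcases y with j | i <;> rfl
    rwa [e1, e2] at this
section Assoc
open Relation

variable (a b c : Pt) (hab : a.d = b.u) (hbc : b.d = c.u)

def jA : Fin a.u.length ⊕ Fin a.d.length →
    (Fin a.u.length ⊕ (Fin a.d.length ⊕ (Fin b.d.length ⊕ Fin c.d.length))) :=
  Sum.map id Sum.inl

def jB : Fin b.u.length ⊕ Fin b.d.length →
    (Fin a.u.length ⊕ (Fin a.d.length ⊕ (Fin b.d.length ⊕ Fin c.d.length))) := fun z =>
  match z with
  | .inl m => .inr (.inl (Fin.cast (by rw [hab]) m))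
  | .inr k => .inr (.inr (.inl k))

def jC : Fin c.u.length ⊕ Fin c.d.length →
    (Fin a.u.length ⊕ (Fin a.d.length ⊕ (Fin b.d.length ⊕ Fin c.d.length))) := fun z =>
  match z with
  | .inl k => .inr (.inr (.inl (Fin.cast (by rw [hbc]) k)))
  | .inr l => .inr (.inr (.inr l))

def FR : (Fin a.u.length ⊕ (Fin a.d.length ⊕ (Fin b.d.length ⊕ Fin c.d.length))) →
    (Fin a.u.length ⊕ (Fin a.d.length ⊕ (Fin b.d.length ⊕ Fin c.d.length))) → Prop :=
  fun x y =>
    (∃ u v, jA a b c u = x ∧ jA a b c v = y ∧ a.rel.r u v) ∨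
    (∃ u v, jB a b c hab u = x ∧ jB a b c hab v = y ∧ b.rel.r u v) ∨
    (∃ u v, jC a b c hbc u = x ∧ jC a b c hbc v = y ∧ c.rel.r u v)

def e1L : (Fin a.u.length ⊕ (Fin a.d.length ⊕ Fin b.d.length)) →
    (Fin a.u.length ⊕ (Fin a.d.length ⊕ (Fin b.d.length ⊕ Fin c.d.length))) := fun z =>
  match z with
  | .inl i => .inl i
  | .inr (.inl m) => .inr (.inl m)
  | .inr (.inr k) => .inr (.inr (.inl k))

def e2L : (Fin a.u.length ⊕ (Fin b.d.length ⊕ Fin c.d.length)) →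
    (Fin a.u.length ⊕ (Fin a.d.length ⊕ (Fin b.d.length ⊕ Fin c.d.length))) := fun z =>
  match z with
  | .inl i => .inl i
  | .inr (.inl k) => .inr (.inr (.inl k))
  | .inr (.inr l) => .inr (.inr (.inr l))

def e1R : (Fin b.u.length ⊕ (Fin b.d.length ⊕ Fin c.d.length)) →
    (Fin a.u.length ⊕ (Fin a.d.length ⊕ (Fin b.d.length ⊕ Fin c.d.length))) := fun z =>
  match z with
  | .inl m => .inr (.inl (Fin.cast (by rw [hab]) m))
  | .inr (.inl k) => .inr (.inr (.inl k))
  | .inr (.inr l) => .inr (.inr (.inr l))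

def e2R : (Fin a.u.length ⊕ (Fin a.d.length ⊕ Fin c.d.length)) →
    (Fin a.u.length ⊕ (Fin a.d.length ⊕ (Fin b.d.length ⊕ Fin c.d.length))) := fun z =>
  match z with
  | .inl i => .inl i
  | .inr (.inl m) => .inr (.inl m)
  | .inr (.inr l) => .inr (.inr (.inr l))

lemma e1L_inj : Function.Injective (e1L a b c) := by
  rintro (i | m | k) (i' | m' | k') h <;>
    simp [e1L] at h <;> simp [h]

lemma e2L_inj : Function.Injective (e2L a b c) := by
  rintro (i | k | l) (i' | k' | l') h <;>
    simp [e2L] at h <;> simp [h]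

lemma e1R_inj : Function.Injective (e1R a b c hab) := by
  rintro (m | k | l) (m' | k' | l') h <;>
    simp [e1R, Fin.ext_iff] at h <;> simp [Fin.ext_iff, h]

lemma e2R_inj : Function.Injective (e2R a b c) := by
  rintro (i | m | l) (i' | m' | l') h <;>
    simp [e2R] at h <;> simp [h]

lemma decodeL : ∀ (w : Fin a.u.length ⊕ (Fin a.d.length ⊕ Fin b.d.length))
    (u : Fin a.u.length ⊕ (Fin b.d.length ⊕ Fin c.d.length)),
    e1L a b c w = e2L a b c u →
    ∃ x' : Fin a.u.length ⊕ Fin b.d.length,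
      (Sum.map id Sum.inr x' : Fin a.u.length ⊕ (Fin a.d.length ⊕ Fin b.d.length)) = w ∧
      (Sum.map id Sum.inl x' : Fin a.u.length ⊕ (Fin b.d.length ⊕ Fin c.d.length)) = u := by
  rintro (i | m | k) (i' | k' | l') h <;> simp [e1L, e2L] at h
  · exact ⟨.inl i, rfl, by simp [h]⟩
  · exact ⟨.inr k, rfl, by simp [h]⟩

lemma decodeR : ∀ (w : Fin b.u.length ⊕ (Fin b.d.length ⊕ Fin c.d.length))
    (u : Fin a.u.length ⊕ (Fin a.d.length ⊕ Fin c.d.length)),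
    e1R a b c hab w = e2R a b c u →
    ∃ x' : Fin b.u.length ⊕ Fin c.d.length,
      (Sum.map id Sum.inr x' : Fin b.u.length ⊕ (Fin b.d.length ⊕ Fin c.d.length)) = w ∧
      ((match x' with
        | .inl m => .inr (.inl (Fin.cast (by rw [hab]) m))
        | .inr l => .inr (.inr l)) : Fin a.u.length ⊕ (Fin a.d.length ⊕ Fin c.d.length)) = u := by
  rintro (m | k | l) (i' | m' | l') h <;> simp [e1R, e2R, Fin.ext_iff] at h
  · exact ⟨.inl m, rfl, by simp [Fin.ext_iff, h]⟩
  · exact ⟨.inr l, rfl, by simp [Fin.ext_iff, h]⟩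

end Assoc
section Assoc2
open Relation

variable (a b c : Pt) (hab : a.d = b.u) (hbc : b.d = c.u)

lemma flatL (x y : Fin a.u.length ⊕ Fin c.d.length) :
    (Pt.comp c (Pt.comp b a hab) hbc).rel.r x y ↔
      EqvGen (FR a b c hab hbc)
        (e2L a b c (Sum.map id Sum.inr x)) (e2L a b c (Sum.map id Sum.inr y)) := by
  have g1 : ∀ u v, cR b a hab u v →
      FR a b c hab hbc (e1L a b c u) (e1L a b c v) := by
    rintro u v (⟨s, t, hs, ht, hr⟩ | ⟨s, t, hs, ht, hr⟩) <;> subst hs ht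
    · exact Or.inl ⟨s, t, by rcases s with s | s <;> rfl,
        by rcases t with t | t <;> rfl, hr⟩
    · exact Or.inr (Or.inl ⟨s, t, by rcases s with s | s <;> rfl,
        by rcases t with t | t <;> rfl, hr⟩)
  have g2 : ∀ u v, cR c (Pt.comp b a hab) hbc u v →
      EqvGen (FR a b c hab hbc) (e2L a b c u) (e2L a b c v) := by
    rintro u v (⟨s, t, hs, ht, hr⟩ | ⟨s, t, hs, ht, hr⟩) <;> subst hs ht
    · have hr' := (comp_rel_iff b a hab s t).mp hr
      have key := egMap (f := e1L a b c)
        (fun p q hpq => EqvGen.rel _ _ (g1 p q hpq)) hr'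
      have es : e2L a b c (ci12 c (Pt.comp b a hab) s)
          = e1L a b c (Sum.map id Sum.inr s) := by rcases s with s | s <;> rfl
      have et : e2L a b c (ci12 c (Pt.comp b a hab) t)
          = e1L a b c (Sum.map id Sum.inr t) := by rcases t with t | t <;> rfl
      rw [es, et]; exact key
    · exact EqvGen.rel _ _ (Or.inr (Or.inr ⟨s, t, by rcases s with s | s <;> rfl,
        by rcases t with t | t <;> rfl, hr⟩))
  constructor
  · intro h
    exact egMap (f := e2L a b c) g2 ((comp_rel_iff _ _ _ _ _).mp h)
  · intro h
    apply (comp_rel_iff c (Pt.comp b a hab) hbc _ _).mpr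
    refine flatten_hard (R1 := cR b a hab) (e1L_inj a b c) (e2L_inj a b c) ?_ ?_ _ _ h
    · rintro u v (⟨s, t, hs, ht, hr⟩ | ⟨s, t, hs, ht, hr⟩ | ⟨s, t, hs, ht, hr⟩) <;>
        subst hs ht
      · exact Or.inl ⟨ci12 b a s, ci12 b a t, by rcases s with s | s <;> rfl,
          by rcases t with t | t <;> rfl, Or.inl ⟨s, t, rfl, rfl, hr⟩⟩
      · exact Or.inl ⟨ci23 b a hab s, ci23 b a hab t, by rcases s with s | s <;> rfl,
          by rcases t with t | t <;> rfl, Or.inr ⟨s, t, rfl, rfl, hr⟩⟩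
      · exact Or.inr ⟨ci23 c (Pt.comp b a hab) hbc s, ci23 c (Pt.comp b a hab) hbc t,
          by rcases s with s | s <;> rfl, by rcases t with t | t <;> rfl,
          Or.inr ⟨s, t, rfl, rfl, hr⟩⟩
    · intro b1 b2 hb u v h1 h2
      obtain ⟨x', hx1, hx2⟩ := decodeL a b c b1 u h1
      obtain ⟨y', hy1, hy2⟩ := decodeL a b c b2 v h2
      subst hx1 hy1 hx2 hy2
      exact EqvGen.rel _ _ (Or.inl ⟨x', y', rfl, rfl, (comp_rel_iff b a hab x' y').mpr hb⟩)

lemma flatR (x y : Fin a.u.length ⊕ Fin c.d.length) :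
    (Pt.comp (Pt.comp c b hbc) a hab).rel.r x y ↔
      EqvGen (FR a b c hab hbc)
        (e2R a b c (Sum.map id Sum.inr x)) (e2R a b c (Sum.map id Sum.inr y)) := by
  have g1 : ∀ u v, cR c b hbc u v →
      FR a b c hab hbc (e1R a b c hab u) (e1R a b c hab v) := by
    rintro u v (⟨s, t, hs, ht, hr⟩ | ⟨s, t, hs, ht, hr⟩) <;> subst hs ht
    · exact Or.inr (Or.inl ⟨s, t, by rcases s with s | s <;> rfl,
        by rcases t with t | t <;> rfl, hr⟩)
    · exact Or.inr (Or.inr ⟨s, t, by rcases s with s | s <;> rfl,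
        by rcases t with t | t <;> rfl, hr⟩)
  have g2 : ∀ u v, cR (Pt.comp c b hbc) a hab u v →
      EqvGen (FR a b c hab hbc) (e2R a b c u) (e2R a b c v) := by
    rintro u v (⟨s, t, hs, ht, hr⟩ | ⟨s, t, hs, ht, hr⟩) <;> subst hs ht
    · exact EqvGen.rel _ _ (Or.inl ⟨s, t, by rcases s with s | s <;> rfl,
        by rcases t with t | t <;> rfl, hr⟩)
    · have hr' := (comp_rel_iff c b hbc s t).mp hr
      have key := egMap (f := e1R a b c hab)
        (fun p q hpq => EqvGen.rel _ _ (g1 p q hpq)) hr'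
      have es : e2R a b c (ci23 (Pt.comp c b hbc) a hab s)
          = e1R a b c hab (Sum.map id Sum.inr s) := by rcases s with s | s <;> rfl
      have et : e2R a b c (ci23 (Pt.comp c b hbc) a hab t)
          = e1R a b c hab (Sum.map id Sum.inr t) := by rcases t with t | t <;> rfl
      rw [es, et]; exact key
  constructor
  · intro h
    exact egMap (f := e2R a b c) g2 ((comp_rel_iff _ _ _ _ _).mp h)
  · intro h
    apply (comp_rel_iff (Pt.comp c b hbc) a hab _ _).mpr
    refine flatten_hard (R1 := cR c b hbc) (e1R_inj a b c hab) (e2R_inj a b c) ?_ ?_ _ _ h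
    · rintro u v (⟨s, t, hs, ht, hr⟩ | ⟨s, t, hs, ht, hr⟩ | ⟨s, t, hs, ht, hr⟩) <;>
        subst hs ht
      · exact Or.inr ⟨ci12 (Pt.comp c b hbc) a s, ci12 (Pt.comp c b hbc) a t,
          by rcases s with s | s <;> rfl, by rcases t with t | t <;> rfl,
          Or.inl ⟨s, t, rfl, rfl, hr⟩⟩
      · exact Or.inl ⟨ci12 c b s, ci12 c b t, by rcases s with s | s <;> rfl,
          by rcases t with t | t <;> rfl, Or.inl ⟨s, t, rfl, rfl, hr⟩⟩
      · exact Or.inl ⟨ci23 c b hbc s, ci23 c b hbc t, by rcases s with s | s <;> rfl,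
          by rcases t with t | t <;> rfl, Or.inr ⟨s, t, rfl, rfl, hr⟩⟩
    · intro b1 b2 hb u v h1 h2
      obtain ⟨x', hx1, hx2⟩ := decodeR a b c hab b1 u h1
      obtain ⟨y', hy1, hy2⟩ := decodeR a b c hab b2 v h2
      subst hx1 hy1 hx2 hy2
      refine EqvGen.rel _ _ (Or.inr ⟨x', y', ?_, ?_, (comp_rel_iff c b hbc x' y').mpr hb⟩)
      · rcases x' with x' | x' <;> rfl
      · rcases y' with y' | y' <;> rfl

lemma comp_assoc : Pt.comp c (Pt.comp b a hab) hbc = Pt.comp (Pt.comp c b hbc) a hab := by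
  apply mk_eq (u := a.u) (d := c.d)
  apply Setoid.ext
  intro x y
  have eL : ∀ z : Fin a.u.length ⊕ Fin c.d.length,
      e2L a b c (Sum.map id Sum.inr z) = e2R a b c (Sum.map id Sum.inr z) := by
    rintro (z | z) <;> rfl
  show (Pt.comp c (Pt.comp b a hab) hbc).rel.r x y ↔
    (Pt.comp (Pt.comp c b hbc) a hab).rel.r x y
  rw [flatL a b c hab hbc x y, flatR a b c hab hbc x y, eL x, eL y]

end Assoc2
section Idem
open Relation

variable (s : Pt)

abbrev Crs (i j : Fin s.u.length) : Prop :=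
  ∃ m : Fin s.d.length, s.rel.r (.inl i) (.inr m) ∧ s.rel.r (.inl j) (.inr m)

abbrev OmA : cA s.star s → cA s.star s → Prop := fun x y =>
  match x, y with
  | .inl i, .inl j => s.rel.r (.inl i) (.inl j)
  | .inl i, .inr (.inl m) => s.rel.r (.inl i) (.inr m)
  | .inl i, .inr (.inr j) => Crs s i j
  | .inr (.inl m), .inl j => s.rel.r (.inl j) (.inr m)
  | .inr (.inl m), .inr (.inl m') => s.rel.r (.inr m) (.inr m')
  | .inr (.inl m), .inr (.inr j) => s.rel.r (.inl j) (.inr m)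
  | .inr (.inr i), .inl j => Crs s i j
  | .inr (.inr i), .inr (.inl m) => s.rel.r (.inl i) (.inr m)
  | .inr (.inr i), .inr (.inr j) => s.rel.r (.inl i) (.inl j)

lemma OmA_refl : ∀ x, OmA s x x := by
  have R := s.rel.iseqv.refl
  rintro (i | m | i)
  · exact R _
  · exact R _
  · exact R _

lemma OmA_symm : ∀ {x y}, OmA s x y → OmA s y x := by
  have Y : ∀ {a b}, s.rel.r a b → s.rel.r b a := fun h => s.rel.iseqv.symm h
  rintro (i | m | i) (j | n | j) h
  · exact Y h
  · exact h
  · exact h.imp fun m hm => ⟨hm.2, hm.1⟩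
  · exact h
  · exact Y h
  · exact h
  · exact h.imp fun m hm => ⟨hm.2, hm.1⟩
  · exact h
  · exact Y h

lemma OmA_trans : ∀ {x y z}, OmA s x y → OmA s y z → OmA s x z := by
  have T : ∀ {a b c}, s.rel.r a b → s.rel.r b c → s.rel.r a c :=
    fun h1 h2 => s.rel.iseqv.trans h1 h2
  have Y : ∀ {a b}, s.rel.r a b → s.rel.r b a := fun h => s.rel.iseqv.symm h
  rintro (i | m | i) (j | n | j) (k | o | k) hxy hyz
  · exact T hxy hyz
  · exact T hxy hyz
  · obtain ⟨m1, h1, h2⟩ := hyz; exact ⟨m1, T hxy h1, h2⟩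
  · exact T hxy (Y hyz)
  · exact T hxy hyz
  · exact ⟨n, hxy, hyz⟩
  · obtain ⟨m1, h1, h2⟩ := hxy; obtain ⟨m2, h3, h4⟩ := hyz
    exact T (T h1 (Y h2)) (T h3 (Y h4))
  · obtain ⟨m1, h1, h2⟩ := hxy; exact T (T h1 (Y h2)) hyz
  · obtain ⟨m1, h1, h2⟩ := hxy; exact ⟨m1, h1, T (Y hyz) h2⟩
  · exact T (Y hyz) hxy
  · exact T (Y hxy) hyz
  · obtain ⟨m2, h3, h4⟩ := hyz; exact T (T h4 (Y h3)) hxy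
  · exact T hyz (Y hxy)
  · exact T hxy hyz
  · exact T hyz (Y hxy)
  · obtain ⟨m2, h3, h4⟩ := hyz; exact T (T h4 (Y h3)) hxy
  · exact T (Y hxy) hyz
  · exact T (Y hyz) hxy
  · obtain ⟨m1, h1, h2⟩ := hxy; exact ⟨m1, h1, T (Y hyz) h2⟩
  · obtain ⟨m1, h1, h2⟩ := hxy; exact T (T h1 (Y h2)) hyz
  · obtain ⟨m1, h1, h2⟩ := hxy; obtain ⟨m2, h3, h4⟩ := hyz
    exact T (T h1 (Y h2)) (T h3 (Y h4))
  · exact ⟨n, hxy, hyz⟩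
  · exact T hxy hyz
  · exact T hxy (Y hyz)
  · obtain ⟨m2, h3, h4⟩ := hyz; exact ⟨m2, T hxy h3, h4⟩
  · exact T hxy hyz
  · exact T hxy hyz

lemma OmA_gen : ∀ x y, cR s.star s rfl x y → OmA s x y := by
  have Y : ∀ {a b}, s.rel.r a b → s.rel.r b a := fun h => s.rel.iseqv.symm h
  rintro x y (⟨w, w', hw, hw', hr⟩ | ⟨w, w', hw, hw', hr⟩) <;> subst hw hw' <;>
    rcases w with i | m <;> rcases w' with j | n
  · exact hr
  · exact hr
  · exact Y hr
  · exact hr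
  · exact hr
  · exact Y hr
  · exact hr
  · exact hr

lemma q'le : ∀ {x y}, EqvGen (cR s.star s rfl) x y → OmA s x y :=
  egLe (OmA_refl s) (OmA_symm s) (OmA_trans s) (OmA_gen s)

lemma d11 (i j : Fin s.u.length) :
    (Pt.comp s.star s rfl).rel.r (.inl i) (.inl j) ↔ s.rel.r (.inl i) (.inl j) :=
  ⟨fun h => q'le s ((comp_rel_iff s.star s rfl _ _).mp h),
   fun h => (comp_rel_iff s.star s rfl _ _).mpr
     (EqvGen.rel _ _ (Or.inl ⟨.inl i, .inl j, rfl, rfl, h⟩))⟩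

lemma d13 (i j : Fin s.u.length) :
    (Pt.comp s.star s rfl).rel.r (.inl i) (.inr j) ↔ Crs s i j := by
  constructor
  · intro h
    exact q'le s ((comp_rel_iff s.star s rfl _ _).mp h)
  · rintro ⟨m, him, hjm⟩
    apply (comp_rel_iff s.star s rfl _ _).mpr
    have g1 : EqvGen (cR s.star s rfl) (.inl i) (.inr (.inl m)) :=
      EqvGen.rel _ _ (Or.inl ⟨.inl i, .inr m, rfl, rfl, him⟩)
    have g2 : EqvGen (cR s.star s rfl) (.inr (.inl m)) (.inr (.inr j)) :=
      EqvGen.rel _ _ (Or.inr ⟨.inl m, .inr j, rfl, rfl, s.rel.iseqv.symm hjm⟩)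
    exact EqvGen.trans _ _ _ g1 g2

lemma d33 (i j : Fin s.u.length) :
    (Pt.comp s.star s rfl).rel.r (.inr i) (.inr j) ↔ s.rel.r (.inl i) (.inl j) :=
  ⟨fun h => q'le s ((comp_rel_iff s.star s rfl _ _).mp h),
   fun h => (comp_rel_iff s.star s rfl _ _).mpr
     (EqvGen.rel _ _ (Or.inr ⟨.inr i, .inr j, rfl, rfl, h⟩))⟩

end Idem
section Idem2
open Relation

variable (s : Pt)

abbrev OmB : cA (Pt.comp s.star s rfl) (Pt.comp s.star s rfl) →
    cA (Pt.comp s.star s rfl) (Pt.comp s.star s rfl) → Prop := fun x y =>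
  match x, y with
  | .inl i, .inl j => s.rel.r (.inl i) (.inl j)
  | .inl i, .inr (.inl j) => Crs s i j
  | .inl i, .inr (.inr j) => Crs s i j
  | .inr (.inl i), .inl j => Crs s i j
  | .inr (.inl i), .inr (.inl j) => s.rel.r (.inl i) (.inl j)
  | .inr (.inl i), .inr (.inr j) => Crs s i j
  | .inr (.inr i), .inl j => Crs s i j
  | .inr (.inr i), .inr (.inl j) => Crs s i j
  | .inr (.inr i), .inr (.inr j) => s.rel.r (.inl i) (.inl j)

lemma OmB_refl : ∀ x, OmB s x x := by
  have R := s.rel.iseqv.refl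
  rintro (i | i | i) <;> exact R _

lemma OmB_symm : ∀ {x y}, OmB s x y → OmB s y x := by
  have Y : ∀ {a b}, s.rel.r a b → s.rel.r b a := fun h => s.rel.iseqv.symm h
  have C : ∀ {i j}, Crs s i j → Crs s j i := fun h => h.imp fun m hm => ⟨hm.2, hm.1⟩
  rintro (i | i | i) (j | j | j) h
  · exact Y h
  · exact C h
  · exact C h
  · exact C h
  · exact Y h
  · exact C h
  · exact C h
  · exact C h
  · exact Y h

lemma OmB_trans : ∀ {x y z}, OmB s x y → OmB s y z → OmB s x z := by
  have T : ∀ {a b c}, s.rel.r a b → s.rel.r b c → s.rel.r a c :=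
    fun h1 h2 => s.rel.iseqv.trans h1 h2
  have Y : ∀ {a b}, s.rel.r a b → s.rel.r b a := fun h => s.rel.iseqv.symm h
  have hWC : ∀ {i j k}, s.rel.r (.inl i) (.inl j) → Crs s j k → Crs s i k :=
    fun h hc => hc.imp fun m hm => ⟨T h hm.1, hm.2⟩
  have hCW : ∀ {i j k}, Crs s i j → s.rel.r (.inl j) (.inl k) → Crs s i k :=
    fun hc h => hc.imp fun m hm => ⟨hm.1, T (Y h) hm.2⟩
  have hCC : ∀ {i j k}, Crs s i j → Crs s j k → Crs s i k := by
    rintro i j k ⟨m1, h1, h2⟩ ⟨m2, h3, h4⟩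
    exact ⟨m2, T (T h1 (Y h2)) h3, h4⟩
  have hCCW : ∀ {i j k}, Crs s i j → Crs s j k → s.rel.r (.inl i) (.inl k) := by
    rintro i j k ⟨m1, h1, h2⟩ ⟨m2, h3, h4⟩
    exact T (T h1 (Y h2)) (T h3 (Y h4))
  rintro (i | i | i) (j | j | j) (k | k | k) hxy hyz
  · exact T hxy hyz
  · exact hWC hxy hyz
  · exact hWC hxy hyz
  · exact hCCW hxy hyz
  · exact hCW hxy hyz
  · exact hCC hxy hyz
  · exact hCCW hxy hyz
  · exact hCC hxy hyz
  · exact hCW hxy hyz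
  · exact hCW hxy hyz
  · exact hCCW hxy hyz
  · exact hCC hxy hyz
  · exact hWC hxy hyz
  · exact T hxy hyz
  · exact hWC hxy hyz
  · exact hCC hxy hyz
  · exact hCCW hxy hyz
  · exact hCW hxy hyz
  · exact hCW hxy hyz
  · exact hCC hxy hyz
  · exact hCCW hxy hyz
  · exact hCC hxy hyz
  · exact hCW hxy hyz
  · exact hCCW hxy hyz
  · exact hWC hxy hyz
  · exact hWC hxy hyz
  · exact T hxy hyz

lemma OmB_gen : ∀ x y, cR (Pt.comp s.star s rfl) (Pt.comp s.star s rfl) rfl x y →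
    OmB s x y := by
  have C : ∀ {i j}, Crs s i j → Crs s j i := fun h => h.imp fun m hm => ⟨hm.2, hm.1⟩
  rintro x y (⟨w, w', hw, hw', hr⟩ | ⟨w, w', hw, hw', hr⟩) <;> subst hw hw' <;>
    rcases w with i | i <;> rcases w' with j | j
  · exact (d11 s i j).mp hr
  · exact (d13 s i j).mp hr
  · exact C ((d13 s j i).mp ((Pt.comp s.star s rfl).rel.iseqv.symm hr))
  · exact (d33 s i j).mp hr
  · exact (d11 s i j).mp hr
  · exact (d13 s i j).mp hr
  · exact C ((d13 s j i).mp ((Pt.comp s.star s rfl).rel.iseqv.symm hr))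
  · exact (d33 s i j).mp hr

lemma q2le : ∀ {x y}, EqvGen (cR (Pt.comp s.star s rfl) (Pt.comp s.star s rfl) rfl) x y →
    OmB s x y :=
  egLe (OmB_refl s) (OmB_symm s) (OmB_trans s) (OmB_gen s)

lemma comp_selfstar_idem :
    Pt.comp (Pt.comp s.star s rfl) (Pt.comp s.star s rfl) rfl = Pt.comp s.star s rfl := by
  apply mk_eq (u := s.u) (d := s.u)
  apply Setoid.ext
  intro x y
  show (Pt.comp (Pt.comp s.star s rfl) (Pt.comp s.star s rfl) rfl).rel.r x y ↔
    (Pt.comp s.star s rfl).rel.r x y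
  have symq : ∀ {a b}, (Pt.comp s.star s rfl).rel.r a b → (Pt.comp s.star s rfl).rel.r b a :=
    fun h => (Pt.comp s.star s rfl).rel.iseqv.symm h
  rcases x with i | i <;> rcases y with j | j
  · constructor
    · intro h
      exact (d11 s i j).mpr (q2le s ((comp_rel_iff _ _ rfl _ _).mp h))
    · intro h
      exact (comp_rel_iff _ _ rfl _ _).mpr
        (EqvGen.rel _ _ (Or.inl ⟨.inl i, .inl j, rfl, rfl, h⟩))
  · constructor
    · intro h
      exact (d13 s i j).mpr (q2le s ((comp_rel_iff _ _ rfl _ _).mp h))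
    · intro h
      apply (comp_rel_iff _ _ rfl _ _).mpr
      obtain ⟨m, him, hjm⟩ := (d13 s i j).mp h
      have g1 : EqvGen (cR (Pt.comp s.star s rfl) (Pt.comp s.star s rfl) rfl)
          (.inl i) (.inr (.inl j)) :=
        EqvGen.rel _ _ (Or.inl ⟨.inl i, .inr j, rfl, rfl, h⟩)
      have g2 : EqvGen (cR (Pt.comp s.star s rfl) (Pt.comp s.star s rfl) rfl)
          (.inr (.inl j)) (.inr (.inr j)) :=
        EqvGen.rel _ _ (Or.inr ⟨.inl j, .inr j, rfl, rfl, (d13 s j j).mpr ⟨m, hjm, hjm⟩⟩)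
      exact EqvGen.trans _ _ _ g1 g2
  · constructor
    · intro h
      refine symq ((d13 s j i).mpr ?_)
      have := q2le s ((comp_rel_iff _ _ rfl _ _).mp h)
      exact this.imp fun m hm => ⟨hm.2, hm.1⟩
    · intro h
      apply (comp_rel_iff _ _ rfl _ _).mpr
      obtain ⟨m, hjm, him⟩ := (d13 s j i).mp (symq h)
      have g1 : EqvGen (cR (Pt.comp s.star s rfl) (Pt.comp s.star s rfl) rfl)
          (.inr (.inr i)) (.inr (.inl i)) :=
        EqvGen.rel _ _ (Or.inr ⟨.inr i, .inl i, rfl, rfl,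
          symq ((d13 s i i).mpr ⟨m, him, him⟩)⟩)
      have g2 : EqvGen (cR (Pt.comp s.star s rfl) (Pt.comp s.star s rfl) rfl)
          (.inr (.inl i)) (.inl j) :=
        EqvGen.rel _ _ (Or.inl ⟨.inr i, .inl j, rfl, rfl, h⟩)
      exact EqvGen.trans _ _ _ g1 g2
  · constructor
    · intro h
      exact (d33 s i j).mpr (q2le s ((comp_rel_iff _ _ rfl _ _).mp h))
    · intro h
      exact (comp_rel_iff _ _ rfl _ _).mpr
        (EqvGen.rel _ _ (Or.inr ⟨.inr i, .inr j, rfl, rfl, h⟩))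
end Idem2

lemma comp_congr {q q2 p p2 : Pt} (hq : q = q2) (hp : p = p2) (h : p.d = q.u)
    (h2 : p2.d = q2.u) : Pt.comp q p h = Pt.comp q2 p2 h2 := by
  subst hq; subst hp; rfl

lemma proj_selfstar (s : Pt) : (Pt.comp s.star s rfl).Projective := by
  refine ⟨rfl, comp_selfstar_idem s, ?_⟩
  exact (star_comp s s.star rfl).trans (comp_congr rfl (pt_star_star s) rfl.symm rfl)


/-- conversely, if `𝒫 ⊆ Proj_𝒞` is stable under `⊙` and
conjugation, and closed under equivalence in `𝒞` and under domination, then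
`𝒫` is a module of projective partitions over `𝒞`. -/
theorem stmt15 (C P : Set Pt) (hC : IsCategory C)
    (hsub : ∀ p ∈ P, p ∈ C ∧ p.Projective)
    (htens : ∀ p ∈ P, ∀ q ∈ P, p.tensor q ∈ P)
    (hconj : ∀ p ∈ P, p.conj ∈ P)
    (hequiv : ∀ p ∈ P, ∀ q : Pt, q ∈ C → q.Projective →
      (∃ r ∈ C, Pt.comp r.star r rfl = p ∧ Pt.comp r r.star rfl = q) → q ∈ P)
    (hdom : ∀ p ∈ P, ∀ q : Pt, q ∈ C → q.Projective →
      ∀ (h1 : Pt.d p = Pt.u q) (h2 : Pt.d q = Pt.u p),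
      Pt.comp q p h1 = q → Pt.comp p q h2 = q → q ∈ P) :
    IsModule C P := by
  refine ⟨fun p hp => (hsub p hp).2, htens, hconj, ?_⟩
  intro p hp r hr h1 h2
  obtain ⟨hpC, hproj⟩ := hsub p hp
  obtain ⟨hpd, hpp, hps⟩ := hproj
  have hcomp := hC.2.2.2.2.2
  have hstarC := hC.2.2.2.2.1
  -- s := Pt.comp r p h2
  have hsC : Pt.comp r p h2 ∈ C := hcomp p hpC r hr h2
  have hsstarC : (Pt.comp r p h2).star ∈ C := hstarC _ hsC
  -- s.star = p r*
  have hstar2 : (Pt.comp r p h2).star = Pt.comp p r.star h1 :=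
    (star_comp p r h2).trans (comp_congr hps rfl h2.symm h1)
  -- pp = p with the proof we have
  have hpp' : Pt.comp p p hpd = p := hpp
  -- sp = s
  have hsp : Pt.comp (Pt.comp r p h2) p hpd = Pt.comp r p h2 :=
    ((comp_assoc p p r hpd h2).symm).trans (comp_congr rfl hpp' h2 h2)
  -- q' := comp s.star s rfl
  have hq'C : Pt.comp (Pt.comp r p h2).star (Pt.comp r p h2) rfl ∈ C :=
    hcomp _ hsC _ hsstarC rfl
  have hq'proj := proj_selfstar (Pt.comp r p h2)
  -- q' p = q'
  have e1 : Pt.comp (Pt.comp (Pt.comp r p h2).star (Pt.comp r p h2) rfl) p hpd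
      = Pt.comp (Pt.comp r p h2).star (Pt.comp r p h2) rfl :=
    ((comp_assoc p (Pt.comp r p h2) (Pt.comp r p h2).star hpd rfl).symm).trans
      (comp_congr rfl hsp rfl rfl)
  -- p s.star = s.star
  have hps' : Pt.comp p (Pt.comp r p h2).star rfl = (Pt.comp r p h2).star :=
    (comp_congr (q2 := p) rfl hstar2 rfl hpd).trans
      ((comp_assoc r.star p p h1 hpd).trans
        ((comp_congr hpp' rfl h1 h1).trans hstar2.symm))
  -- p q' = q'
  have e2 : Pt.comp p (Pt.comp (Pt.comp r p h2).star (Pt.comp r p h2) rfl) rfl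
      = Pt.comp (Pt.comp r p h2).star (Pt.comp r p h2) rfl :=
    (comp_assoc (Pt.comp r p h2) (Pt.comp r p h2).star p rfl rfl).trans
      (comp_congr hps' rfl rfl rfl)
  have hq'P : Pt.comp (Pt.comp r p h2).star (Pt.comp r p h2) rfl ∈ P :=
    hdom p hp _ hq'C hq'proj hpd rfl e1 e2
  -- G = s s.star
  have hGs : Pt.comp (Pt.comp r p h2) (Pt.comp r p h2).star rfl
      = Pt.comp r (Pt.comp p r.star h1) h2 :=
    (comp_congr (q2 := Pt.comp r p h2) rfl hstar2 rfl hpd).trans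
      ((comp_assoc r.star p (Pt.comp r p h2) h1 hpd).trans
        ((comp_congr hsp rfl h1 h1).trans (comp_assoc r.star p r h1 h2).symm))
  have hGC : Pt.comp r (Pt.comp p r.star h1) h2 ∈ C :=
    hcomp _ (hcomp r.star (hstarC r hr) p hpC h1) r hr h2
  have hGproj : (Pt.comp r (Pt.comp p r.star h1) h2).Projective := by
    have h := proj_selfstar (Pt.comp r p h2).star
    rw [comp_congr (pt_star_star (Pt.comp r p h2)) rfl rfl rfl] at h
    rwa [hGs] at h
  exact hequiv _ hq'P _ hGC hGproj ⟨Pt.comp r p h2, hsC, rfl, hGs⟩
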